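/- For every integer N ≥ 3, every eigenvalue λ ∈ ℂ of the matrix A_0 (viewed as a complex matrix by mapping its real entries into ℂ) has strictly positive real part. -/

import Mathlib

open scoped Matrix

/-- The coefficients `g_k^{(β)}`. -/
noncomputable def gcoef (β : ℝ) : ℕ → ℝ
  | 0 => 1
  | k + 1 => (1 - (β + 1) / ((k : ℝ) + 1)) * gcoef β k

/-- The WSGD coefficients `ω_k^{(β)}`. -/
noncomputable def w (β : ℝ) : ℕ → ℝ
  | 0 => β / 2 * gcoef β 0
  | k + 1 => β / 2 * gcoef β (k + 1) + (2 - β) / 2 * gcoef β k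
/-- The `(N−1) × (N−1)` lower Hessenberg Toeplitz matrix `G_β`
(1-based entry `(i,j)` equals `ω_{i−j+1}` when `i − j + 1 ≥ 0`, else `0`). -/
noncomputable def Gmat (β : ℝ) (N : ℕ) : Matrix (Fin (N - 1)) (Fin (N - 1)) ℝ :=
  Matrix.of fun i j => if (j : ℕ) ≤ (i : ℕ) + 1 then w β ((i : ℕ) + 1 - (j : ℕ)) else 0

/-- `K_N = e₁·G_β + e₂·G_βᵀ`. -/
noncomputable def Kmat (β e1 e2 : ℝ) (N : ℕ) : Matrix (Fin (N - 1)) (Fin (N - 1)) ℝ :=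
  e1 • Gmat β N + e2 • (Gmat β N)ᵀ
/-- `c_0^{(α,σ)} = τ^{−α}·σ^{1−α}/Γ(2−α)` with `σ = 1 − α/2`. -/
noncomputable def c0 (α τ : ℝ) : ℝ :=
  τ ^ (-α) * (1 - α / 2) ^ (1 - α) / Real.Gamma (2 - α)

/-- `A_0 = h^β·c_0^{(α,σ)}·I − σ·K_N` with `σ = 1 − α/2`. -/
noncomputable def A0mat (β α h τ e1 e2 : ℝ) (N : ℕ) :
    Matrix (Fin (N - 1)) (Fin (N - 1)) ℝ :=
  (h ^ β * c0 α τ) • (1 : Matrix (Fin (N - 1)) (Fin (N - 1)) ℝ) -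
    (1 - α / 2) • Kmat β e1 e2 N

open Finset

section coeffs

variable {β : ℝ} (hβ1 : 1 < β) (hβ2 : β < 2)

lemma gcoef_succ (β : ℝ) (k : ℕ) :
    gcoef β (k + 1) = (1 - (β + 1) / ((k : ℝ) + 1)) * gcoef β k := rfl

lemma gcoef_zero (β : ℝ) : gcoef β 0 = 1 := rfl

lemma gcoef_one (β : ℝ) : gcoef β 1 = -β := by
  show (1 - (β + 1) / ((0 : ℕ) + 1 : ℝ)) * gcoef β 0 = -β
  rw [gcoef_zero]; push_cast; ring

lemma gcoef_two (β : ℝ) : gcoef β 2 = β * (β - 1) / 2 := by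
  show (1 - (β + 1) / ((1 : ℕ) + 1 : ℝ)) * gcoef β 1 = _
  rw [gcoef_one]; push_cast; ring

include hβ1 hβ2 in
lemma gcoef_pos : ∀ k, 2 ≤ k → 0 < gcoef β k := by
  intro k hk
  induction k, hk using Nat.le_induction with
  | base => rw [gcoef_two]; nlinarith
  | succ n hn ih =>
      rw [gcoef_succ]
      have h1 : (0:ℝ) < 1 - (β + 1) / ((n : ℝ) + 1) := by
        have hn2 : (2:ℝ) ≤ (n:ℝ) := by exact_mod_cast hn
        rw [sub_pos, div_lt_one (by linarith)]
        linarith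
      positivity

lemma gcoef_key (β : ℝ) : ∀ n : ℕ,
    ((n : ℝ) + 1) * gcoef β (n + 1) = -β * ∑ k ∈ range (n + 1), gcoef β k := by
  intro n
  induction n with
  | zero => simp [gcoef_one, gcoef_zero]
  | succ n ih =>
      have hpos : ((n : ℝ) + 1) ≠ 0 := by positivity
      have hpos2 : ((n : ℝ) + 2) ≠ 0 := by positivity
      have h1 : gcoef β (n + 2) = (1 - (β + 1) / ((n : ℝ) + 1 + 1)) * gcoef β (n + 1) := by
        rw [gcoef_succ β (n+1)]; push_cast; ring_nf
      have h2 : ∑ k ∈ range (n + 2), gcoef β k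
          = ∑ k ∈ range (n + 1), gcoef β k + gcoef β (n + 1) := by
        rw [Finset.sum_range_succ]
      have h3 : ((n:ℝ) + 1 + 1) * gcoef β (n + 2) = ((n:ℝ) + 1 - β) * gcoef β (n + 1) := by
        rw [h1]
        have : ((n:ℝ) + 1 + 1) ≠ 0 := by positivity
        field_simp
        ring
      push_cast
      rw [h2, h3]
      linear_combination ih

include hβ1 hβ2 in
lemma Sg_neg : ∀ n, 1 ≤ n → ∑ k ∈ range (n + 1), gcoef β k < 0 := by
  intro n hn
  induction n, hn using Nat.le_induction with
  | base => simp [Finset.sum_range_succ, gcoef_zero, gcoef_one]; linarith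
  | succ n hn ih =>
      rw [Finset.sum_range_succ]
      have hkey := gcoef_key β n
      have hpos : (0:ℝ) < (n : ℝ) + 1 := by positivity
      have hg : gcoef β (n + 1) = -β * (∑ k ∈ range (n + 1), gcoef β k) / ((n : ℝ) + 1) := by
        field_simp; linarith [hkey]
      rw [hg]
      have hb : (0:ℝ) < β := by linarith
      have h1 : (1:ℝ) ≤ (n:ℝ) := by exact_mod_cast hn
      have hfac : 0 < 1 - β / ((n:ℝ) + 1) := by
        rw [sub_pos, div_lt_one hpos]; linarith
      have : ∑ k ∈ range (n + 1), gcoef β k + -β * (∑ k ∈ range (n + 1), gcoef β k) / ((n : ℝ) + 1)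
          = (1 - β / ((n:ℝ) + 1)) * ∑ k ∈ range (n + 1), gcoef β k := by
        field_simp; ring
      rw [this]
      exact mul_neg_of_pos_of_neg hfac ih

lemma w_succ (β : ℝ) (k : ℕ) :
    w β (k + 1) = β / 2 * gcoef β (k + 1) + (2 - β) / 2 * gcoef β k := rfl

lemma w_zero (β : ℝ) : w β 0 = β / 2 := by simp [w, gcoef_zero]

include hβ1 in
lemma w_one_neg : w β 1 < 0 := by
  have : w β 1 = β / 2 * gcoef β 1 + (2 - β) / 2 * gcoef β 0 := rfl
  rw [this, gcoef_one, gcoef_zero]; nlinarith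

include hβ1 hβ2 in
lemma w02_nonneg : 0 ≤ w β 0 + w β 2 := by
  have h2 : w β 2 = β / 2 * gcoef β 2 + (2 - β) / 2 * gcoef β 1 := rfl
  rw [w_zero, h2, gcoef_two, gcoef_one]
  have key : β / 2 + (β / 2 * (β * (β - 1) / 2) + (2 - β) / 2 * -β) = β * (β + 2) * (β - 1) / 4 := by
    ring
  rw [key]
  have h1 : (0:ℝ) ≤ β := by linarith
  have h2 : (0:ℝ) ≤ β + 2 := by linarith
  have h3 : (0:ℝ) ≤ β - 1 := by linarith
  positivity

include hβ1 hβ2 in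
lemma w_nonneg : ∀ k, 3 ≤ k → 0 ≤ w β k := by
  intro k hk
  obtain ⟨m, rfl⟩ : ∃ m, k = m + 1 := ⟨k - 1, by omega⟩
  rw [w_succ]
  have h1 := gcoef_pos hβ1 hβ2 (m + 1) (by omega)
  have h2 := gcoef_pos hβ1 hβ2 m (by omega)
  nlinarith

lemma Sw_eq (β : ℝ) (n : ℕ) : ∑ k ∈ range (n + 1), w β k
    = β / 2 * ∑ k ∈ range (n + 1), gcoef β k + (2 - β) / 2 * ∑ k ∈ range n, gcoef β k := by
  rw [Finset.sum_range_succ' (fun k => w β k), Finset.sum_range_succ' (fun k => gcoef β k)]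
  simp only [w_succ, w_zero, gcoef_zero, Finset.sum_add_distrib, Finset.mul_sum, mul_add]
  ring

include hβ1 hβ2 in
lemma Sw_neg : ∀ n, 2 ≤ n → ∑ k ∈ range (n + 1), w β k < 0 := by
  intro n hn
  obtain ⟨m, rfl⟩ : ∃ m, n = m + 2 := ⟨n - 2, by omega⟩
  rw [Sw_eq]
  have h1 := Sg_neg hβ1 hβ2 (m + 2) (by omega)
  have h2 := Sg_neg hβ1 hβ2 (m + 1) (by omega)
  nlinarith

end coeffs

/-- The entry function of `Gmat`, for a general size `n`. -/
noncomputable def Gfun (β : ℝ) (n : ℕ) : Fin n → Fin n → ℝ :=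
  fun i j => if (j : ℕ) ≤ (i : ℕ) + 1 then w β ((i : ℕ) + 1 - (j : ℕ)) else 0

lemma Gmat_apply (β : ℝ) (N : ℕ) (i j : Fin (N - 1)) :
    Gmat β N i j = Gfun β (N - 1) i j := rfl

section sums

variable {β : ℝ} {n : ℕ}

lemma tail_sum (β : ℝ) (n : ℕ) :
    ∑ k ∈ range n, w β (k + 1) = ∑ k ∈ range (n + 1), w β k - w β 0 := by
  rw [Finset.sum_range_succ' (w β) n]
  ring

lemma rowsum_interior (i : Fin n) (hi : (i : ℕ) + 1 < n) :
    ∑ j : Fin n, Gfun β n i j = ∑ k ∈ range ((i : ℕ) + 2), w β k := by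
  unfold Gfun
  rw [Fin.sum_univ_eq_sum_range
    (fun k => if k ≤ (i : ℕ) + 1 then w β ((i : ℕ) + 1 - k) else 0) n]
  have hsub : range ((i : ℕ) + 2) ⊆ range n := by rw [Finset.range_subset_range]; omega
  rw [← Finset.sum_subset hsub (by
    intro x hx hx'
    simp only [Finset.mem_range] at hx hx'
    rw [if_neg (by omega)])]
  have h1 : ∀ k ∈ range ((i : ℕ) + 2),
      (if k ≤ (i : ℕ) + 1 then w β ((i : ℕ) + 1 - k) else 0)
        = w β ((i : ℕ) + 2 - 1 - k) := by
    intro k hk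
    simp only [Finset.mem_range] at hk
    rw [if_pos (by omega)]
    try congr 1
    try omega
  rw [Finset.sum_congr rfl h1, Finset.sum_range_reflect (w β) ((i : ℕ) + 2)]

lemma rowsum_last (i : Fin n) (hi : (i : ℕ) + 1 = n) :
    ∑ j : Fin n, Gfun β n i j = ∑ k ∈ range (n + 1), w β k - w β 0 := by
  unfold Gfun
  rw [Fin.sum_univ_eq_sum_range
    (fun k => if k ≤ (i : ℕ) + 1 then w β ((i : ℕ) + 1 - k) else 0) n]
  have h1 : ∀ k ∈ range n,
      (if k ≤ (i : ℕ) + 1 then w β ((i : ℕ) + 1 - k) else 0)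
        = (fun t => w β (t + 1)) (n - 1 - k) := by
    intro k hk
    simp only [Finset.mem_range] at hk
    rw [if_pos (by omega)]
    congr 1
    omega
  rw [Finset.sum_congr rfl h1, Finset.sum_range_reflect (fun t => w β (t + 1)) n,
    tail_sum]

lemma colsum_pos (i : Fin n) (hi : 1 ≤ (i : ℕ)) :
    ∑ j : Fin n, Gfun β n j i = ∑ k ∈ range (n - (i : ℕ) + 1), w β k := by
  have hcoe : ∀ j : Fin n, Gfun β n j i
      = (fun k => if (i : ℕ) ≤ k + 1 then w β (k + 1 - (i : ℕ)) else 0) (j : ℕ) := by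
    intro j; rfl
  rw [Finset.sum_congr rfl (fun j _ => hcoe j), Fin.sum_univ_eq_sum_range
    (fun k => if (i : ℕ) ≤ k + 1 then w β (k + 1 - (i : ℕ)) else 0) n]
  have hsub : Finset.Ico ((i : ℕ) - 1) n ⊆ range n := by
    intro x hx
    simp only [Finset.mem_Ico] at hx
    simp only [Finset.mem_range]
    exact hx.2
  rw [← Finset.sum_subset hsub (by
    intro x hx hx'
    simp only [Finset.mem_range] at hx
    simp only [Finset.mem_Ico, not_and, not_le] at hx'
    rw [if_neg (by omega)])]
  have h1 : ∀ k ∈ Finset.Ico ((i : ℕ) - 1) n,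
      (if (i : ℕ) ≤ k + 1 then w β (k + 1 - (i : ℕ)) else 0)
        = (fun k => w β (k + 1 - (i : ℕ))) k := by
    intro k hk
    simp only [Finset.mem_Ico] at hk
    rw [if_pos (by omega)]
  rw [Finset.sum_congr rfl h1, Finset.sum_Ico_eq_sum_range]
  have h2 : ∀ t ∈ range (n - ((i : ℕ) - 1)),
      (fun k => w β (k + 1 - (i : ℕ))) ((i : ℕ) - 1 + t) = w β t := by
    intro t ht
    simp only
    congr 1
    omega
  rw [Finset.sum_congr rfl h2]
  have hlt := i.isLt
  have heq : n - ((i : ℕ) - 1) = n - (i : ℕ) + 1 := by omega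
  rw [heq]

lemma colsum_zero (i : Fin n) (hi : (i : ℕ) = 0) :
    ∑ j : Fin n, Gfun β n j i = ∑ k ∈ range (n + 1), w β k - w β 0 := by
  have hcoe : ∀ j : Fin n, Gfun β n j i = (fun k => w β (k + 1)) (j : ℕ) := by
    intro j
    show (if (i : ℕ) ≤ (j : ℕ) + 1 then w β ((j : ℕ) + 1 - (i : ℕ)) else 0) = _
    rw [if_pos (by omega)]
    simp only
    congr 1
    omega
  rw [Finset.sum_congr rfl (fun j _ => hcoe j),
    Fin.sum_univ_eq_sum_range (fun k => w β (k + 1)) n, tail_sum]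

lemma rowcol_nonpos (hβ1 : 1 < β) (hβ2 : β < 2) (hn : 2 ≤ n) (i : Fin n) :
    (∑ j : Fin n, Gfun β n i j) + (∑ j : Fin n, Gfun β n j i) ≤ 0 := by
  have hSw := Sw_neg hβ1 hβ2 n hn
  have hw1 := w_one_neg hβ1 (β := β)
  have hS2 : ∑ k ∈ range 2, w β k = w β 0 + w β 1 := by
    rw [Finset.sum_range_succ, Finset.sum_range_one]
  rcases Nat.eq_zero_or_pos (i : ℕ) with hi0 | hip
  · have hrow := rowsum_interior (β := β) i (by omega)
    have hcol := colsum_zero (β := β) i hi0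
    rw [hrow, hcol, hi0]
    rw [show (0 : ℕ) + 2 = 2 from rfl, hS2]
    linarith
  · rcases eq_or_lt_of_le (show (i : ℕ) + 1 ≤ n from i.isLt) with hlast | hint
    · have hrow := rowsum_last (β := β) i hlast
      have hcol := colsum_pos (β := β) i hip
      rw [hrow, hcol]
      have : n - (i : ℕ) + 1 = 2 := by omega
      rw [this, hS2]
      linarith
    · have hrow := rowsum_interior (β := β) i hint
      have hcol := colsum_pos (β := β) i hip
      rw [hrow, hcol]
      have h1 : ∑ k ∈ range ((i : ℕ) + 2), w β k < 0 := by
        have := Sw_neg hβ1 hβ2 ((i : ℕ) + 1) (by omega)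
        simpa [show (i : ℕ) + 1 + 1 = (i : ℕ) + 2 from rfl] using this
      have h2 : ∑ k ∈ range (n - (i : ℕ) + 1), w β k < 0 := by
        have := Sw_neg hβ1 hβ2 (n - (i : ℕ)) (by omega)
        simpa using this
      linarith

end sums

section quad

lemma quad_bound {n : ℕ} (A : Matrix (Fin n) (Fin n) ℝ) (c : ℝ)
    (hd : ∀ i : Fin n, c + (1/2) * ∑ j ∈ Finset.univ.erase i, |A i j + A j i| ≤ A i i)
    (v : Fin n → ℂ) :
    c * ∑ i, Complex.normSq (v i) ≤
      ∑ i : Fin n, ∑ j : Fin n, A i j * ((starRingEnd ℂ) (v i) * v j).re := by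
  set r : Fin n → Fin n → ℝ := fun i j => ((starRingEnd ℂ) (v i) * v j).re with hr
  set q : Fin n → ℝ := fun i => Complex.normSq (v i) with hq
  have hq_nonneg : ∀ i, 0 ≤ q i := fun i => Complex.normSq_nonneg _
  have hr_sym : ∀ i j, r i j = r j i := by
    intro i j
    simp only [hr, Complex.mul_re, Complex.conj_re, Complex.conj_im]
    ring
  have hr_diag : ∀ i, r i i = q i := by
    intro i
    simp only [hr, hq, Complex.mul_re, Complex.conj_re, Complex.conj_im, Complex.normSq_apply]
    ring
  have hr_bound : ∀ i j, |r i j| ≤ (q i + q j) / 2 := by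
    intro i j
    simp only [hr, hq, Complex.mul_re, Complex.conj_re, Complex.conj_im, Complex.normSq_apply]
    rw [abs_le]
    constructor <;>
      nlinarith [sq_nonneg ((v i).re + (v j).re), sq_nonneg ((v i).re - (v j).re),
        sq_nonneg ((v i).im + (v j).im), sq_nonneg ((v i).im - (v j).im)]
  have swap1 : ∑ i : Fin n, ∑ j : Fin n, A j i * r i j
      = ∑ i : Fin n, ∑ j : Fin n, A i j * r i j := by
    rw [Finset.sum_comm]
    exact Finset.sum_congr rfl fun i _ => Finset.sum_congr rfl fun j _ => by rw [hr_sym]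
  have step1 : ∑ i : Fin n, ∑ j : Fin n, A i j * r i j
      = ∑ i : Fin n, ∑ j : Fin n, ((A i j + A j i) / 2) * r i j := by
    have expand : ∀ i j : Fin n, ((A i j + A j i) / 2) * r i j
        = (A i j * r i j) / 2 + (A j i * r i j) / 2 := fun i j => by ring
    simp_rw [expand, Finset.sum_add_distrib, ← Finset.sum_div]
    rw [swap1]
    ring
  have key : ∀ i j : Fin n, -(|A i j + A j i| * q i / 4 + |A i j + A j i| * q j / 4)
      ≤ ((A i j + A j i) / 2) * r i j := by
    intro i j
    have h1 : -|((A i j + A j i) / 2) * r i j| ≤ ((A i j + A j i) / 2) * r i j := neg_abs_le _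
    have h2 : |((A i j + A j i) / 2) * r i j| = |A i j + A j i| / 2 * |r i j| := by
      rw [abs_mul, abs_div]
      norm_num
    have h3 : |A i j + A j i| / 2 * |r i j| ≤ |A i j + A j i| / 2 * ((q i + q j) / 2) :=
      mul_le_mul_of_nonneg_left (hr_bound i j) (by positivity)
    rw [h2] at h1
    nlinarith
  -- the two "quarter" sums
  have hS21 : ∑ i : Fin n, ∑ j ∈ Finset.univ.erase i, |A i j + A j i| * q j / 4
      = ∑ i : Fin n, ∑ j ∈ Finset.univ.erase i, |A i j + A j i| * q i / 4 := by
    have hcomm := Finset.sum_comm' (s := (Finset.univ : Finset (Fin n)))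
      (t := fun i => Finset.univ.erase i) (t' := (Finset.univ : Finset (Fin n)))
      (s' := fun j => Finset.univ.erase j)
      (f := fun i j => |A i j + A j i| * q j / 4) (by
        intro x y
        simp only [Finset.mem_univ, Finset.mem_erase, true_and, and_true, ne_eq]
        exact ne_comm)
    rw [hcomm]
    exact Finset.sum_congr rfl fun i _ => Finset.sum_congr rfl fun j _ => by
      rw [add_comm (A j i)]
  have lb1 : ∀ i : Fin n,
      A i i * q i - ∑ j ∈ Finset.univ.erase i,
          (|A i j + A j i| * q i / 4 + |A i j + A j i| * q j / 4)
        ≤ ∑ j : Fin n, ((A i j + A j i) / 2) * r i j := by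
    intro i
    rw [← Finset.add_sum_erase _ (fun j => ((A i j + A j i) / 2) * r i j)
      (Finset.mem_univ i)]
    have hii : ((A i i + A i i) / 2) * r i i = A i i * q i := by rw [hr_diag]; ring
    rw [hii]
    have hsum : ∑ j ∈ Finset.univ.erase i,
        -(|A i j + A j i| * q i / 4 + |A i j + A j i| * q j / 4)
        ≤ ∑ j ∈ Finset.univ.erase i, ((A i j + A j i) / 2) * r i j :=
      Finset.sum_le_sum fun j _ => key i j
    rw [Finset.sum_neg_distrib] at hsum
    linarith
  have lb2 : ∑ i : Fin n,
      (A i i * q i - ∑ j ∈ Finset.univ.erase i,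
        (|A i j + A j i| * q i / 4 + |A i j + A j i| * q j / 4))
      ≤ ∑ i : Fin n, ∑ j : Fin n, ((A i j + A j i) / 2) * r i j :=
    Finset.sum_le_sum fun i _ => lb1 i
  rw [← step1] at lb2
  -- simplify the left side of lb2
  have simp_lhs : ∑ i : Fin n,
      (A i i * q i - ∑ j ∈ Finset.univ.erase i,
        (|A i j + A j i| * q i / 4 + |A i j + A j i| * q j / 4))
      = ∑ i : Fin n,
        (A i i * q i - (∑ j ∈ Finset.univ.erase i, |A i j + A j i|) * q i / 2) := by
    rw [Finset.sum_sub_distrib, Finset.sum_sub_distrib]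
    congr 1
    simp_rw [Finset.sum_add_distrib]
    rw [hS21, ← two_mul, Finset.mul_sum]
    refine Finset.sum_congr rfl fun i _ => ?_
    have e1 : ∀ x : ℝ, x * q i / 4 = x * (q i / 4) := fun x => by ring
    simp_rw [e1, ← Finset.sum_mul]
    ring
  rw [simp_lhs] at lb2
  refine le_trans ?_ lb2
  rw [Finset.mul_sum]
  refine Finset.sum_le_sum fun i _ => ?_
  have hdi := hd i
  nlinarith [hq_nonneg i]

end quad

lemma Gfun_diag (β : ℝ) {n : ℕ} (i : Fin n) : Gfun β n i i = w β 1 := by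
  unfold Gfun
  rw [if_pos (Nat.le_succ _)]
  congr 1
  omega

lemma Gfun_symm_nonneg {β : ℝ} (hβ1 : 1 < β) (hβ2 : β < 2) {n : ℕ} (i j : Fin n)
    (hij : i ≠ j) : 0 ≤ Gfun β n i j + Gfun β n j i := by
  unfold Gfun
  have hij' : (i : ℕ) ≠ (j : ℕ) := Fin.val_ne_of_ne hij
  rcases lt_or_gt_of_ne hij' with hlt | hgt
  · rcases eq_or_lt_of_le (Nat.succ_le_of_lt hlt) with heq | hlt2
    · rw [if_pos (by omega), if_pos (by omega),
        show (i : ℕ) + 1 - (j : ℕ) = 0 by omega,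
        show (j : ℕ) + 1 - (i : ℕ) = 2 by omega]
      exact w02_nonneg hβ1 hβ2
    · rw [if_neg (by omega), if_pos (by omega)]
      have := w_nonneg hβ1 hβ2 ((j : ℕ) + 1 - (i : ℕ)) (by omega)
      linarith
  · rcases eq_or_lt_of_le (Nat.succ_le_of_lt hgt) with heq | hlt2
    · rw [if_pos (by omega), if_pos (by omega),
        show (i : ℕ) + 1 - (j : ℕ) = 2 by omega,
        show (j : ℕ) + 1 - (i : ℕ) = 0 by omega]
      have := w02_nonneg hβ1 hβ2
      linarith
    · rw [if_pos (by omega), if_neg (by omega)]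
      have := w_nonneg hβ1 hβ2 ((i : ℕ) + 1 - (j : ℕ)) (by omega)
      linarith

theorem A0_eigenvalues_pos_re (N : ℕ) (hN : 3 ≤ N)
    (β α h τ e1 e2 : ℝ) (hβ1 : 1 < β) (hβ2 : β < 2)
    (hα0 : 0 < α) (hα1 : α < 1) (hh : 0 < h) (hτ : 0 < τ)
    (he1 : 0 < e1) (he2 : 0 < e2) :
    ∀ μ ∈ spectrum ℂ ((A0mat β α h τ e1 e2 N).map (Complex.ofReal : ℝ → ℂ)),
      0 < μ.re := by
  intro μ hμ
  have hn2 : 2 ≤ N - 1 := by omega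
  set A : Matrix (Fin (N - 1)) (Fin (N - 1)) ℝ := A0mat β α h τ e1 e2 N with hA
  set M : Matrix (Fin (N - 1)) (Fin (N - 1)) ℂ := A.map (Complex.ofReal) with hM
  -- the positive constant
  set c : ℝ := h ^ β * c0 α τ with hc
  have hc_pos : 0 < c := by
    rw [hc]
    unfold c0
    have hΓ : 0 < Real.Gamma (2 - α) := Real.Gamma_pos_of_pos (by linarith)
    have h1 : (0:ℝ) < h ^ β := Real.rpow_pos_of_pos hh β
    have h2 : (0:ℝ) < τ ^ (-α) := Real.rpow_pos_of_pos hτ (-α)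
    have h3 : (0:ℝ) < (1 - α / 2) ^ (1 - α) := Real.rpow_pos_of_pos (by linarith) _
    positivity
  set σ : ℝ := 1 - α / 2 with hσ
  have hσ_pos : 0 < σ := by rw [hσ]; linarith
  -- entries of A
  have hA_apply : ∀ i j : Fin (N - 1), A i j
      = c * (if i = j then 1 else 0)
        - σ * (e1 * Gfun β (N - 1) i j + e2 * Gfun β (N - 1) j i) := by
    intro i j
    rw [hA]
    simp only [A0mat, Kmat, Matrix.sub_apply, Matrix.smul_apply, Matrix.add_apply,
      Matrix.one_apply, Matrix.transpose_apply, smul_eq_mul, ← Gmat_apply]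
    try ring
  -- diagonal dominance hypothesis
  have hd : ∀ i : Fin (N - 1),
      c + (1/2) * ∑ j ∈ Finset.univ.erase i, |A i j + A j i| ≤ A i i := by
    intro i
    have hdiag : A i i = c - σ * (e1 + e2) * w β 1 := by
      rw [hA_apply i i, if_pos rfl, Gfun_diag]
      ring
    have hoff : ∀ j ∈ Finset.univ.erase i,
        |A i j + A j i| = σ * (e1 + e2) * (Gfun β (N - 1) i j + Gfun β (N - 1) j i) := by
      intro j hj
      have hji : j ≠ i := (Finset.mem_erase.1 hj).1
      rw [hA_apply i j, hA_apply j i, if_neg (Ne.symm hji), if_neg hji]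
      have hT := Gfun_symm_nonneg hβ1 hβ2 i j (Ne.symm hji)
      have heq : c * 0 - σ * (e1 * Gfun β (N - 1) i j + e2 * Gfun β (N - 1) j i)
          + (c * 0 - σ * (e1 * Gfun β (N - 1) j i + e2 * Gfun β (N - 1) i j))
          = -(σ * (e1 + e2) * (Gfun β (N - 1) i j + Gfun β (N - 1) j i)) := by ring
      rw [heq, abs_neg, abs_of_nonneg (by positivity)]
    rw [Finset.sum_congr rfl hoff, hdiag]
    have hsum : ∑ j ∈ Finset.univ.erase i,
        σ * (e1 + e2) * (Gfun β (N - 1) i j + Gfun β (N - 1) j i)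
        = σ * (e1 + e2) * ((∑ j, Gfun β (N - 1) i j) + (∑ j, Gfun β (N - 1) j i)
            - 2 * w β 1) := by
      rw [← Finset.mul_sum]
      congr 1
      rw [Finset.sum_erase_eq_sub (Finset.mem_univ i), Finset.sum_add_distrib,
        Gfun_diag]
      ring
    rw [hsum]
    have hrc := rowcol_nonpos hβ1 hβ2 hn2 i
    have hprod : σ * (e1 + e2) * ((∑ j, Gfun β (N - 1) i j) + (∑ j, Gfun β (N - 1) j i)) ≤ 0 :=
      mul_nonpos_of_nonneg_of_nonpos (by positivity) hrc
    nlinarith [hprod]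
  -- eigenvector
  rw [spectrum.mem_iff] at hμ
  have hdet : (algebraMap ℂ (Matrix (Fin (N - 1)) (Fin (N - 1)) ℂ) μ - M).det = 0 := by
    by_contra hd0
    exact hμ ((Matrix.isUnit_iff_isUnit_det _).2 (isUnit_iff_ne_zero.2 hd0))
  obtain ⟨v, hv0, hv⟩ := (Matrix.exists_mulVec_eq_zero_iff).2 hdet
  have hMv : M.mulVec v = μ • v := by
    rw [Algebra.algebraMap_eq_smul_one, Matrix.sub_mulVec, Matrix.smul_mulVec,
      Matrix.one_mulVec, sub_eq_zero] at hv
    exact hv.symm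
  set S : ℝ := ∑ i, Complex.normSq (v i) with hS
  have hS_pos : 0 < S := by
    obtain ⟨i0, hi0⟩ := Function.ne_iff.1 hv0
    exact Finset.sum_pos' (fun i _ => Complex.normSq_nonneg _)
      ⟨i0, Finset.mem_univ _, Complex.normSq_pos.2 hi0⟩
  -- the quadratic form identity
  have hQ : μ.re * S
      = ∑ i : Fin (N - 1), ∑ j : Fin (N - 1),
          A i j * ((starRingEnd ℂ) (v i) * v j).re := by
    have hleft : ∑ i, (starRingEnd ℂ) (v i) * (M.mulVec v) i = μ * (S : ℂ) := by
      rw [hMv]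
      have : ∀ i, (starRingEnd ℂ) (v i) * (μ • v) i = μ * ((Complex.normSq (v i) : ℂ)) := by
        intro i
        rw [Pi.smul_apply, smul_eq_mul, Complex.normSq_eq_conj_mul_self]
        ring
      rw [Finset.sum_congr rfl fun i _ => this i, ← Finset.mul_sum]
      congr 1
      rw [hS]
      push_cast
      rfl
    have hre : (∑ i, (starRingEnd ℂ) (v i) * (M.mulVec v) i).re
        = ∑ i : Fin (N - 1), ∑ j : Fin (N - 1),
            A i j * ((starRingEnd ℂ) (v i) * v j).re := by
      rw [Complex.re_sum]
      refine Finset.sum_congr rfl fun i _ => ?_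
      have hmv : (M.mulVec v) i = ∑ j, (A i j : ℂ) * v j := by
        simp [hM, Matrix.mulVec, dotProduct, Matrix.map_apply]
      rw [hmv, Finset.mul_sum, Complex.re_sum]
      refine Finset.sum_congr rfl fun j _ => ?_
      rw [show (starRingEnd ℂ) (v i) * ((A i j : ℂ) * v j)
          = (A i j : ℂ) * ((starRingEnd ℂ) (v i) * v j) by ring,
        Complex.re_ofReal_mul]
    rw [← hre, hleft]
    simp [Complex.mul_re]
  have hquad := quad_bound A c hd v
  rw [← hQ] at hquad
  have : c ≤ μ.re := le_of_mul_le_mul_right (by linarith [hquad]) hS_pos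
  linarith
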